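/- Suppose α_i = −β′_i and β_i = −α′_i for each i = 1, …, n−1. Then γ′_{n−i} + γ_i = 1 for each i = 1, …, n−1. -/

import Mathlib

namespace Paper

open Finset

/-- Index type for the basis {z, e_1,…,e_n, f_1,…,f_n, t} of the cotangent Lie algebra
`T*g` of `g = ℝ ⋉_{J_n(0)} ℝ^n`.  The constructor `Bas.e i` (with `i : Fin n`)
represents the basis vector `e_{i+1}` (math indexing `1,…,n`), similarly `Bas.f i`. -/
inductive Bas (n : ℕ) : Type
  | z : Bas n
  | t : Bas n
  | e : Fin n → Bas n
  | f : Fin n → Bas n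
  deriving DecidableEq

/-- The underlying vector space of `T*g`, as coordinate functions on the basis. -/
abbrev V (n : ℕ) : Type := Bas n → ℝ

/-- The basis vectors of `T*g`. -/
noncomputable def bas (n : ℕ) (b : Bas n) : V n := Pi.single b 1

/-- The Lie bracket of `T*g`: the bilinear extension of
`[t, e_{i+1}] = e_i`, `[t, f_{i+1}] = -f_i`, `[e_{i+1}, f_{n-i+1}] = z` for `i = 1,…,n-1`
(math indexing), all other brackets of basis vectors being zero. -/
noncomputable def bracket (n : ℕ) (x y : V n) : V n := fun b =>
  match b with
  | Bas.z => ∑ i : Fin n, ∑ j : Fin n,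
      (if (i : ℕ) + (j : ℕ) = n then
        x (Bas.e i) * y (Bas.f j) - x (Bas.f j) * y (Bas.e i) else 0)
  | Bas.t => 0
  | Bas.e k => if h : (k : ℕ) + 1 < n then
      x Bas.t * y (Bas.e ⟨(k : ℕ) + 1, h⟩) - x (Bas.e ⟨(k : ℕ) + 1, h⟩) * y Bas.t else 0
  | Bas.f k => if h : (k : ℕ) + 1 < n then
      -(x Bas.t * y (Bas.f ⟨(k : ℕ) + 1, h⟩)) + x (Bas.f ⟨(k : ℕ) + 1, h⟩) * y Bas.t else 0

/-- `αseq α i = α_i = (i(α-1)+1)/((α-1)(i-1)+1)`. -/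
noncomputable def αseq (α : ℝ) (i : ℕ) : ℝ :=
  ((i : ℝ) * (α - 1) + 1) / ((α - 1) * ((i : ℝ) - 1) + 1)

/-- `βseq β i = β_i = (i(β+1)-1)/(-(β+1)(i-1)+1)`. -/
noncomputable def βseq (β : ℝ) (i : ℕ) : ℝ :=
  ((i : ℝ) * (β + 1) - 1) / (-(β + 1) * ((i : ℝ) - 1) + 1)

/-- `γseq n α β i = γ_i = (α-1)((n-i)(β+1)-1)/(n(α-1)(β+1)-(α-1)+β+1)`. -/
noncomputable def γseq (n : ℕ) (α β : ℝ) (i : ℕ) : ℝ :=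
  ((α - 1) * (((n : ℝ) - (i : ℝ)) * (β + 1) - 1)) /
    ((n : ℝ) * (α - 1) * (β + 1) - (α - 1) + β + 1)

/-- The standing conditions on `α, β`:
`k(α-1)+1 ≠ 0` and `k(β+1)-1 ≠ 0` for all integers `k ≥ 1`, and
`n(α-1)(β+1) - α + β + 2 ≠ 0`. -/
def Cond (n : ℕ) (α β : ℝ) : Prop :=
  (∀ k : ℕ, 1 ≤ k → (k : ℝ) * (α - 1) + 1 ≠ 0) ∧
  (∀ k : ℕ, 1 ≤ k → (k : ℝ) * (β + 1) - 1 ≠ 0) ∧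
  (n : ℝ) * (α - 1) * (β + 1) - α + β + 2 ≠ 0

/-- The product `∆_{(α,β)}` on `T*g`: the bilinear extension of
`t ∆ e_{i+1} = α_i e_i`, `e_{i+1} ∆ t = (α_i - 1) e_i`, `t ∆ f_{i+1} = β_i f_i`,
`f_{i+1} ∆ t = (β_i + 1) f_i`, `e_{i+1} ∆ f_{n-i+1} = γ_i z`,
`f_{n-i+1} ∆ e_{i+1} = (γ_i - 1) z` for `i = 1,…,n-1` (math indexing),
all other products of basis vectors being zero. -/
noncomputable def lsa (n : ℕ) (α β : ℝ) (x y : V n) : V n := fun b =>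
  match b with
  | Bas.z => ∑ i : Fin n, ∑ j : Fin n,
      (if (i : ℕ) + (j : ℕ) = n then
        γseq n α β (i : ℕ) * (x (Bas.e i) * y (Bas.f j))
          + (γseq n α β (i : ℕ) - 1) * (x (Bas.f j) * y (Bas.e i))
      else 0)
  | Bas.t => 0
  | Bas.e k => if h : (k : ℕ) + 1 < n then
      αseq α ((k : ℕ) + 1) * (x Bas.t * y (Bas.e ⟨(k : ℕ) + 1, h⟩))
        + (αseq α ((k : ℕ) + 1) - 1) * (x (Bas.e ⟨(k : ℕ) + 1, h⟩) * y Bas.t)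
      else 0
  | Bas.f k => if h : (k : ℕ) + 1 < n then
      βseq β ((k : ℕ) + 1) * (x Bas.t * y (Bas.f ⟨(k : ℕ) + 1, h⟩))
        + (βseq β ((k : ℕ) + 1) + 1) * (x (Bas.f ⟨(k : ℕ) + 1, h⟩) * y Bas.t)
      else 0

/-- `D` is a left-symmetric structure on `T*g`: the associator is symmetric in the
first two arguments and `x∆y - y∆x = [x,y]`. -/
def IsLSA (n : ℕ) (D : V n → V n → V n) : Prop :=
  (∀ x y z : V n, D x (D y z) - D (D x y) z = D y (D x z) - D (D y x) z) ∧
  (∀ x y : V n, D x y - D y x = bracket n x y)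

/-- Completeness: every right translation `y ↦ y ∆ x` is nilpotent. -/
def IsComplete (n : ℕ) (D : V n → V n → V n) : Prop :=
  ∀ x : V n, ∃ m : ℕ, ∀ y : V n, (fun w => D w x)^[m] y = 0

/-- Bilinearity of a product. -/
def IsBilin (n : ℕ) (D : V n → V n → V n) : Prop :=
  (∀ (c : ℝ) (x x' y : V n), D (c • x + x') y = c • D x y + D x' y) ∧
  (∀ (c : ℝ) (x y y' : V n), D x (c • y + y') = c • D x y + D x y')

/-- Two left-symmetric structures on `T*g` are isomorphic if some Lie algebra
automorphism of `T*g` intertwines the products. -/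
def LSAIso (n : ℕ) (D D' : V n → V n → V n) : Prop :=
  ∃ φ : V n ≃ₗ[ℝ] V n,
    (∀ x y, φ (bracket n x y) = bracket n (φ x) (φ y)) ∧
    (∀ x y, φ (D x y) = D' (φ x) (φ y))

/-- The 2-form `ω_λ = t* ∧ z* + ∑ λ_i e_i* ∧ f_{n-i+1}*` with `λ_i = λ - i + 1`. -/
noncomputable def omegaForm (n : ℕ) (lam : ℝ) (x y : V n) : ℝ :=
  (x Bas.t * y Bas.z - x Bas.z * y Bas.t) +
  ∑ i : Fin n, (lam - ((i : ℕ) : ℝ)) *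
    (x (Bas.e i) * y (Bas.f ⟨n - 1 - (i : ℕ), by have := i.isLt; omega⟩)
      - x (Bas.f ⟨n - 1 - (i : ℕ), by have := i.isLt; omega⟩) * y (Bas.e i))

/-- Two symplectic forms on `T*g` are symplectomorphic up to homothety if some Lie
algebra automorphism pulls one back to a nonzero multiple of the other. -/
def SympIso (n : ℕ) (ω ω' : V n → V n → ℝ) : Prop :=
  ∃ φ : V n ≃ₗ[ℝ] V n,
    (∀ x y, φ (bracket n x y) = bracket n (φ x) (φ y)) ∧
    ∃ c : ℝ, c ≠ 0 ∧ ∀ x y, ω' (φ x) (φ y) = c * ω x y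

/-- `ω` is a symplectic structure on `T*g`. -/
def IsSymplectic (n : ℕ) (ω : V n → V n → ℝ) : Prop :=
  (∀ (c : ℝ) (x x' y : V n), ω (c • x + x') y = c * ω x y + ω x' y) ∧
  (∀ x y : V n, ω x y = - ω y x) ∧
  (∀ x : V n, (∀ y, ω x y = 0) → x = 0) ∧
  (∀ x y z : V n, ω x (bracket n y z) + ω y (bracket n z x) + ω z (bracket n x y) = 0)

/-- if `α_i = -β'_i` and `β_i = -α'_i` for `i = 1,…,n-1`, then
`γ'_{n-i} + γ_i = 1` for `i = 1,…,n-1`. -/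
theorem stmt7 (n : ℕ) (hn : 2 ≤ n) (α β α' β' : ℝ)
    (hc : Cond n α β) (hc' : Cond n α' β')
    (hsym : ∀ i : ℕ, 1 ≤ i → i ≤ n - 1 → αseq α i = -βseq β' i ∧ βseq β i = -αseq α' i) :
    ∀ i : ℕ, 1 ≤ i → i ≤ n - 1 → γseq n α' β' (n - i) + γseq n α β i = 1 := by
  intro i hi hin
  obtain ⟨h1, h2⟩ := hsym 1 le_rfl (by omega)
  norm_num [αseq, βseq] at h1 h2
  have hb' : β' = -α := by linarith
  have ha' : α' = -β := by linarith
  subst hb' ha'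
  have hD : (n : ℝ) * (α - 1) * (β + 1) - (α - 1) + β + 1 ≠ 0 := by
    intro h; exact hc.2.2 (by linarith)
  have hcast : ((n - i : ℕ) : ℝ) = (n : ℝ) - (i : ℝ) := by
    push_cast [Nat.cast_sub (show i ≤ n by omega)]; ring
  unfold γseq
  rw [hcast]
  have hD2 : (n : ℝ) * (-β - 1) * (-α + 1) - (-β - 1) + -α + 1 ≠ 0 := by
    intro h; exact hD (by linarith [h])
  have hE : (n : ℝ) * (-β - 1) * (-α + 1) - (-β - 1) + -α + 1 = (n : ℝ) * (α - 1) * (β + 1) - (α - 1) + β + 1 := by ring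
  rw [hE, ← add_div, div_eq_one_iff_eq hD]
  ring

end Paper
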